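/- For every n ∈ ℕ one has the identity Σ_{m=0}^{n} (2(q − q^{1/2})·[m]_q − (2[1/2]_q − 1))·a_m·q^{n−m} = (q−1)·[n+1]_q²·a_{n+1} in Q. -/

import Mathlib

/- Setting (following Dwork-type q-congruences / q-hypergeometric papers):
`p` is an odd prime, `R = ℤ_p[[q−1]]` is implemented as `PowerSeries ℤ_[p]`, the power-series
variable `PowerSeries.X` standing for `q − 1`. -/

noncomputable section
open PowerSeries
namespace QDwork

variable (p : ℕ) [Fact p.Prime]

/-- `R = ℤ_p[[q−1]]`. -/
abbrev R : Type := PowerSeries ℤ_[p]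

/-- `q = 1 + (q−1) ∈ R`. -/
def qq : R p := 1 + PowerSeries.X

/-- `q^a = Σ_{i≥0} binom(a,i)(q−1)^i ∈ R` for `a ∈ ℤ_p`, using the p-adically interpolated
binomial coefficients `Ring.choose` (`ℤ_p` is a binomial ring). -/
def qpow (a : ℤ_[p]) : R p := PowerSeries.mk fun i => Ring.choose a i

/-- The q-number `[a]_q = (q^a−1)/(q−1) = Σ_{i≥1} binom(a,i)(q−1)^{i−1} ∈ R` for `a ∈ ℤ_p`. -/
def qnum (a : ℤ_[p]) : R p := PowerSeries.mk fun i => Ring.choose a (i + 1)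

/-- The q-number `[n]_q = 1 + q + ⋯ + q^{n−1} ∈ R` of a natural number `n`. -/
def qnat (n : ℕ) : R p := ∑ i ∈ Finset.range n, qq p ^ i

/-- `1/2 ∈ ℤ_p` (recall `p` is odd, so `2` is a unit of `ℤ_p`). -/
def half : ℤ_[p] := Ring.inverse 2

/-- `Q = Frac(R)`. -/
abbrev Q : Type := FractionRing (R p)

/-- The canonical injection `R → Q`. -/
def ι : R p →+* Q p := algebraMap (R p) (Q p)

/-- `q ∈ Q`. -/
def qQ : Q p := ι p (qq p)

/-- `[a]_q` viewed in `Q`, for `a ∈ ℤ_p`. -/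
def qnumQ (a : ℤ_[p]) : Q p := ι p (qnum p a)

/-- `[n]_q` viewed in `Q`, for a natural number `n`. -/
def qnatQ (n : ℕ) : Q p := ι p (qnat p n)

/-- `a_n = ∏_{i=0}^{n−1} ([i+1/2]_q/[i+1]_q)² ∈ Q`, with `a_0 = 1`. -/
def aCoef (n : ℕ) : Q p :=
  ∏ i ∈ Finset.range n, (qnumQ p ((i : ℤ_[p]) + half p) / qnumQ p ((i : ℤ_[p]) + 1)) ^ 2

/-- `F = Σ_{n≥0} a_n λ^n ∈ Q[[λ]]`. -/
def Fq : PowerSeries (Q p) := PowerSeries.mk fun n => aCoef p n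


/-! ### Auxiliary lemmas -/

lemma isUnit_two (hp : p ≠ 2) : IsUnit (2 : ℤ_[p]) := by
  rw [PadicInt.isUnit_iff]
  refine le_antisymm (PadicInt.norm_le_one _) ?_
  by_contra h
  push_neg at h
  have h2 : ((2 : ℤ) : ℤ_[p]) = 2 := by push_cast; ring
  rw [← h2, PadicInt.norm_int_lt_one_iff_dvd] at h
  have hpd : p ∣ 2 := by exact_mod_cast h
  exact hp ((Nat.prime_dvd_prime_iff_eq (Fact.out : p.Prime) Nat.prime_two).mp hpd)

lemma two_mul_half (hp : p ≠ 2) : (2 : ℤ_[p]) * half p = 1 :=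
  Ring.mul_inverse_cancel 2 (isUnit_two p hp)

lemma half_add_half (hp : p ≠ 2) : half p + half p = 1 := by
  have := two_mul_half p hp
  linear_combination this

lemma qpow_add (a b : ℤ_[p]) : qpow p (a + b) = qpow p a * qpow p b := by
  apply PowerSeries.ext
  intro n
  rw [PowerSeries.coeff_mul]
  simp only [qpow, PowerSeries.coeff_mk]
  exact Ring.add_choose_eq n (Commute.all a b)

lemma qpow_one : qpow p (1 : ℤ_[p]) = qq p := by
  apply PowerSeries.ext
  intro n
  have h1 : (1 : ℤ_[p]) = ((1 : ℕ) : ℤ_[p]) := by norm_num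
  simp only [qpow, PowerSeries.coeff_mk, h1, Ring.choose_natCast, qq, map_add,
    PowerSeries.coeff_one, PowerSeries.coeff_X]
  rcases n with _ | _ | n <;> simp [Nat.choose]

lemma qpow_natCast (n : ℕ) : qpow p (n : ℤ_[p]) = qq p ^ n := by
  induction n with
  | zero =>
    apply PowerSeries.ext
    intro n
    simp only [qpow, Nat.cast_zero, PowerSeries.coeff_mk]
    have h0 : (0 : ℤ_[p]) = ((0 : ℕ) : ℤ_[p]) := by norm_num
    rw [h0, Ring.choose_natCast]
    cases n <;> simp [PowerSeries.coeff_one]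
  | succ k ih =>
    have : ((k + 1 : ℕ) : ℤ_[p]) = (k : ℤ_[p]) + 1 := by push_cast; ring
    rw [this, qpow_add, ih, qpow_one, pow_succ]

lemma X_mul_qnum (a : ℤ_[p]) :
    (PowerSeries.X : R p) * qnum p a = qpow p a - 1 := by
  apply PowerSeries.ext
  intro n
  rcases n with _ | n
  · simp [qpow, Ring.choose_zero_right]
  · rw [PowerSeries.coeff_succ_X_mul]
    simp [qnum, qpow, PowerSeries.coeff_one]

lemma X_mul_qnat (n : ℕ) :
    (PowerSeries.X : R p) * qnat p n = qq p ^ n - 1 := by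
  have hX : (PowerSeries.X : R p) = qq p - 1 := by rw [qq]; ring
  rw [hX, qnat, mul_comm, geom_sum_mul]

lemma ι_inj : Function.Injective (ι p) := IsFractionRing.injective (R p) (Q p)

lemma ι_ne_zero {x : R p} (hx : x ≠ 0) : ι p x ≠ 0 := by
  intro h
  exact hx (ι_inj p (by rw [h, map_zero]))

lemma qQ_sub_one : qQ p - 1 = ι p PowerSeries.X := by
  rw [qQ, qq, map_add, map_one]; ring

lemma qQ_sub_one_ne_zero : qQ p - 1 ≠ 0 := by
  rw [qQ_sub_one]
  exact ι_ne_zero p PowerSeries.X_ne_zero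

lemma rel_num (a : ℤ_[p]) : (qQ p - 1) * qnumQ p a = ι p (qpow p a) - 1 := by
  rw [qQ_sub_one, qnumQ, ← map_mul, X_mul_qnum, map_sub, map_one]

lemma rel_nat (n : ℕ) : (qQ p - 1) * qnatQ p n = qQ p ^ n - 1 := by
  rw [qQ_sub_one, qnatQ, ← map_mul, X_mul_qnat, map_sub, map_one, map_pow, qQ]

lemma qnumQ_ne_zero {a : ℤ_[p]} (ha : a ≠ 0) : qnumQ p a ≠ 0 := by
  apply ι_ne_zero
  intro h
  apply ha
  have := congrArg (PowerSeries.coeff 0) h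
  simpa [qnum, Ring.choose_one_right] using this

lemma cast_add_half_ne_zero (hp : p ≠ 2) (i : ℕ) : ((i : ℤ_[p]) + half p) ≠ 0 := by
  intro h
  have h2 : (2 : ℤ_[p]) * ((i : ℤ_[p]) + half p) = ((2 * i + 1 : ℕ) : ℤ_[p]) := by
    push_cast
    rw [mul_add, two_mul_half p hp]
  rw [h, mul_zero] at h2
  exact (Nat.cast_ne_zero.mpr (by omega)) h2.symm

lemma cast_add_one_ne_zero (i : ℕ) : ((i : ℤ_[p]) + 1) ≠ 0 := by
  have h : ((i : ℤ_[p]) + 1) = ((i + 1 : ℕ) : ℤ_[p]) := by push_cast; ring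
  rw [h]
  exact Nat.cast_ne_zero.mpr (Nat.succ_ne_zero i)

lemma aCoef_ne_zero (hp : p ≠ 2) (n : ℕ) : aCoef p n ≠ 0 := by
  rw [aCoef]
  apply Finset.prod_ne_zero_iff.mpr
  intro i _
  exact pow_ne_zero _ (div_ne_zero (qnumQ_ne_zero p (cast_add_half_ne_zero p hp i))
    (qnumQ_ne_zero p (cast_add_one_ne_zero p i)))

lemma s_mul_s (hp : p ≠ 2) :
    ι p (qpow p (half p)) * ι p (qpow p (half p)) = qQ p := by
  rw [← map_mul, ← qpow_add, half_add_half p hp, qpow_one, qQ]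

lemma qnumQ_cast_succ (n : ℕ) : qnumQ p ((n : ℤ_[p]) + 1) = qnatQ p (n + 1) := by
  apply mul_left_cancel₀ (qQ_sub_one_ne_zero p)
  rw [rel_num, rel_nat]
  congr 1
  have h : ((n : ℤ_[p]) + 1) = ((n + 1 : ℕ) : ℤ_[p]) := by push_cast; ring
  rw [h, qpow_natCast, map_pow, qQ]

lemma qnumQ_one : qnumQ p (1 : ℤ_[p]) = 1 := by
  have h0 : ((0 : ℕ) : ℤ_[p]) + 1 = 1 := by norm_num
  rw [← h0, qnumQ_cast_succ, qnatQ, qnat]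
  simp

lemma key_base {K : Type*} [Field K] (q s h : K) (hq : q - 1 ≠ 0)
    (eh : (q - 1) * h = s - 1) (es : s * s = q) :
    1 - 2 * h = (q - 1) * h ^ 2 := by
  apply mul_left_cancel₀ hq
  linear_combination (-2 - (q - 1) * h - (s - 1)) * eh - es

lemma key_step {K : Type*} [Field K] (q s A N M h : K) (hq : q - 1 ≠ 0)
    (e1 : (q - 1) * N = A - 1) (eM : (q - 1) * M = A * s - 1)
    (eh : (q - 1) * h = s - 1) (es : s * s = q) :
    q * (q - 1) * N ^ 2 + 2 * (q - s) * N - (2 * h - 1) = (q - 1) * M ^ 2 := by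
  apply mul_left_cancel₀ hq
  linear_combination (q * ((q - 1) * N + A - 1) + 2 * (q - s)) * e1
    - ((q - 1) * M + A * s - 1) * eM - 2 * eh - A ^ 2 * es

/-- For every `n ∈ ℕ`:
`Σ_{m=0}^{n} (2(q − q^{1/2})[m]_q − (2[1/2]_q − 1))·a_m·q^{n−m} = (q−1)·[n+1]_q²·a_{n+1}`. -/
theorem a_coeff_sum_identity (hp : p ≠ 2) (n : ℕ) :
    ∑ m ∈ Finset.range (n + 1),
      (2 * (qQ p - ι p (qpow p (half p))) * qnatQ p m - (2 * qnumQ p (half p) - 1)) *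
        aCoef p m * qQ p ^ (n - m) =
      (qQ p - 1) * qnatQ p (n + 1) ^ 2 * aCoef p (n + 1) := by
  have hq1 : qQ p - 1 ≠ 0 := qQ_sub_one_ne_zero p
  have es : ι p (qpow p (half p)) * ι p (qpow p (half p)) = qQ p := s_mul_s p hp
  have eh : (qQ p - 1) * qnumQ p (half p) = ι p (qpow p (half p)) - 1 := by
    rw [rel_num]
  induction n with
  | zero =>
    rw [Finset.sum_range_one]
    have h0 : qnatQ p 0 = 0 := by simp [qnatQ, qnat]
    have h1 : qnatQ p 1 = 1 := by simp [qnatQ, qnat]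
    have ha0 : aCoef p 0 = 1 := by simp [aCoef]
    have ha1 : aCoef p 1 = (qnumQ p (half p)) ^ 2 := by
      rw [aCoef, Finset.prod_range_one]
      norm_num [qnumQ_one]
    rw [h0, h1, ha0, ha1]
    simp only [Nat.sub_self, pow_zero]
    have key := key_base (qQ p) (ι p (qpow p (half p))) (qnumQ p (half p)) hq1 eh es
    linear_combination key
  | succ n ih =>
    rw [Finset.sum_range_succ]
    have hstep : ∀ m ∈ Finset.range (n + 1),
        (2 * (qQ p - ι p (qpow p (half p))) * qnatQ p m - (2 * qnumQ p (half p) - 1)) *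
          aCoef p m * qQ p ^ (n + 1 - m) =
        qQ p * ((2 * (qQ p - ι p (qpow p (half p))) * qnatQ p m -
          (2 * qnumQ p (half p) - 1)) * aCoef p m * qQ p ^ (n - m)) := by
      intro m hm
      have hm' : m ≤ n := Nat.lt_succ_iff.mp (Finset.mem_range.mp hm)
      have : n + 1 - m = (n - m) + 1 := by omega
      rw [this, pow_succ]
      ring
    rw [Finset.sum_congr rfl hstep, ← Finset.mul_sum, ih]
    have e1 : (qQ p - 1) * qnatQ p (n + 1) = qQ p ^ (n + 1) - 1 := rel_nat p (n + 1)
    have eM : (qQ p - 1) * qnumQ p (((n + 1 : ℕ) : ℤ_[p]) + half p) =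
        qQ p ^ (n + 1) * ι p (qpow p (half p)) - 1 := by
      rw [rel_num, qpow_add, qpow_natCast, map_mul, map_pow, qQ]
    have key := key_step (qQ p) (ι p (qpow p (half p))) (qQ p ^ (n + 1))
      (qnatQ p (n + 1)) (qnumQ p (((n + 1 : ℕ) : ℤ_[p]) + half p)) (qnumQ p (half p))
      hq1 e1 eM eh es
    have ha : aCoef p (n + 1 + 1) = aCoef p (n + 1) *
        (qnumQ p (((n + 1 : ℕ) : ℤ_[p]) + half p) / qnatQ p (n + 1 + 1)) ^ 2 := by
      rw [aCoef, Finset.prod_range_succ, ← aCoef, qnumQ_cast_succ]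
    have hN2 : qnatQ p (n + 1 + 1) ≠ 0 := by
      rw [← qnumQ_cast_succ]
      exact qnumQ_ne_zero p (cast_add_one_ne_zero p (n + 1))
    have hA : (qQ p - 1) * qnatQ p (n + 1 + 1) ^ 2 * (aCoef p (n + 1) *
        (qnumQ p (((n + 1 : ℕ) : ℤ_[p]) + half p) / qnatQ p (n + 1 + 1)) ^ 2) =
        ((qQ p - 1) * qnumQ p (((n + 1 : ℕ) : ℤ_[p]) + half p) ^ 2) * aCoef p (n + 1) := by
      field_simp
    rw [ha, hA]
    simp only [Nat.sub_self, pow_zero]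
    linear_combination aCoef p (n + 1) * key


end QDwork
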